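/- Let σ be a simple permutation of length m with σ ≠ 21, and let α₁,…,α_m be nonempty permutations. Then the inflation π = σ[α₁,…,α_m] is an involution if and only if σ is an involution and α_i = α_{σ(i)}^{-1} for all 1 ≤ i ≤ m. -/

import Mathlib

/-- `π` contains the pattern `σ`. -/
def Contains {n k : ℕ} (π : Equiv.Perm (Fin n)) (σ : Equiv.Perm (Fin k)) : Prop :=
  ∃ f : Fin k → Fin n, StrictMono f ∧ ∀ i j : Fin k, σ i < σ j ↔ π (f i) < π (f j)

def IsInvolution {n : ℕ} (π : Equiv.Perm (Fin n)) : Prop := π⁻¹ = π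

/-- direct sum of permutations -/
def directSum {m n : ℕ} (σ : Equiv.Perm (Fin m)) (τ : Equiv.Perm (Fin n)) :
    Equiv.Perm (Fin (m + n)) :=
  finSumFinEquiv.symm.trans ((Equiv.sumCongr σ τ).trans finSumFinEquiv)

/-- skew sum of permutations -/
def skewSum {m n : ℕ} (σ : Equiv.Perm (Fin m)) (τ : Equiv.Perm (Fin n)) :
    Equiv.Perm (Fin (m + n)) :=
  finSumFinEquiv.symm.trans ((Equiv.sumCongr σ τ).trans
    ((Equiv.sumComm (Fin m) (Fin n)).trans (finSumFinEquiv.trans (finCongr (Nat.add_comm n m)))))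

def SumDecomposable {n : ℕ} (π : Equiv.Perm (Fin n)) : Prop :=
  ∃ (a b : ℕ) (h : a + b = n), 0 < a ∧ 0 < b ∧
    ∃ (σ : Equiv.Perm (Fin a)) (τ : Equiv.Perm (Fin b)),
      π = (finCongr h).permCongr (directSum σ τ)

def SkewDecomposable {n : ℕ} (π : Equiv.Perm (Fin n)) : Prop :=
  ∃ (a b : ℕ) (h : a + b = n), 0 < a ∧ 0 < b ∧
    ∃ (σ : Equiv.Perm (Fin a)) (τ : Equiv.Perm (Fin b)),
      π = (finCongr h).permCongr (skewSum σ τ)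

/-- a set of contiguous indices/values -/
def SetContiguous {n : ℕ} (S : Set (Fin n)) : Prop :=
  ∀ ⦃i j k : Fin n⦄, i ∈ S → j ∈ S → i ≤ k → k ≤ j → k ∈ S

/-- an interval of the permutation `π` -/
def IsPermInterval {n : ℕ} (π : Equiv.Perm (Fin n)) (S : Set (Fin n)) : Prop :=
  SetContiguous S ∧ SetContiguous (π '' S)

/-- A permutation of length at least 2 is simple if all its intervals are trivial. -/
def IsSimple {n : ℕ} (π : Equiv.Perm (Fin n)) : Prop :=
  2 ≤ n ∧ ∀ S : Set (Fin n), IsPermInterval π S → S.ncard ≤ 1 ∨ S = Set.univ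

-- patterns (0-indexed one-line notation)
noncomputable def p123 : Equiv.Perm (Fin 3) := Equiv.ofBijective ![0, 1, 2] (by decide)
noncomputable def p132 : Equiv.Perm (Fin 3) := Equiv.ofBijective ![0, 2, 1] (by decide)
noncomputable def p213 : Equiv.Perm (Fin 3) := Equiv.ofBijective ![1, 0, 2] (by decide)
noncomputable def p1324 : Equiv.Perm (Fin 4) := Equiv.ofBijective ![0, 2, 1, 3] (by decide)
noncomputable def p1234 : Equiv.Perm (Fin 4) := Equiv.ofBijective ![0, 1, 2, 3] (by decide)
noncomputable def p1342 : Equiv.Perm (Fin 4) := Equiv.ofBijective ![0, 2, 3, 1] (by decide)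
noncomputable def p1423 : Equiv.Perm (Fin 4) := Equiv.ofBijective ![0, 3, 1, 2] (by decide)
noncomputable def p2341 : Equiv.Perm (Fin 4) := Equiv.ofBijective ![1, 2, 3, 0] (by decide)
noncomputable def p2413 : Equiv.Perm (Fin 4) := Equiv.ofBijective ![1, 3, 0, 2] (by decide)
noncomputable def p5274163 : Equiv.Perm (Fin 7) := Equiv.ofBijective ![4, 1, 6, 3, 0, 5, 2] (by decide)

-- the order-respecting equivalence between a lexicographic sigma of Fins and a Fin
noncomputable def finSigmaOrderEquiv {m : ℕ} (k : Fin m → ℕ) :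
    (Σₗ i : Fin m, Fin (k i)) ≃o Fin (∑ i, k i) :=
  (monoEquivOfFin (Σₗ i : Fin m, Fin (k i)) (by
    rw [Fintype.card_congr (ofLex : _ ≃ (Σ i : Fin m, Fin (k i)))]
    simp)).symm

/-- the inflation `σ[α 0, …, α (m-1)]` -/
noncomputable def inflation {m : ℕ} (σ : Equiv.Perm (Fin m)) (k : Fin m → ℕ)
    (α : ∀ i, Equiv.Perm (Fin (k i))) : Equiv.Perm (Fin (∑ i, k i)) :=
  ((finSigmaOrderEquiv k).toEquiv.symm.trans
    ((ofLex : (Σₗ i : Fin m, Fin (k i)) ≃ (Σ i : Fin m, Fin (k i))).trans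
      ((Equiv.sigmaCongr σ fun i =>
          (α i).trans (finCongr (congrArg k (σ.symm_apply_apply i).symm))).trans
        ((toLex : (Σ t : Fin m, Fin (k (σ.symm t))) ≃ (Σₗ t : Fin m, Fin (k (σ.symm t)))).trans
          ((finSigmaOrderEquiv fun t => k (σ.symm t)).toEquiv.trans
            (finCongr (Equiv.sum_comp σ.symm k)))))))

namespace InflInv

open Set Function

/-! ### generic lemmas about block structure of lex-sigma order isos -/

variable {m N : ℕ}

section BV
variable {k : Fin m → ℕ}

/-- the block index of a position -/
noncomputable def blk (W : (Σₗ i : Fin m, Fin (k i)) ≃o Fin N) (x : Fin N) : Fin m :=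
  (ofLex (W.symm x)).1

theorem blk_mono (W : (Σₗ i : Fin m, Fin (k i)) ≃o Fin N) : Monotone (blk W) := by
  intro x y hxy
  have h : W.symm x ≤ W.symm y := W.symm.monotone hxy
  rcases Sigma.Lex.le_def.mp h with h | ⟨h, _⟩
  · exact h.le
  · exact le_of_eq h

theorem blk_surj (W : (Σₗ i : Fin m, Fin (k i)) ≃o Fin N) (hk : ∀ i, 0 < k i) :
    Function.Surjective (blk W) := by
  intro i
  exact ⟨W (toLex ⟨i, ⟨0, hk i⟩⟩), by simp [blk]⟩

theorem blk_eq_iff (W : (Σₗ i : Fin m, Fin (k i)) ≃o Fin N) {x : Fin N} {i : Fin m}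
    (hx : blk W x = i) : ∃ a : Fin (k i), x = W (toLex ⟨i, a⟩) := by
  rcases h : ofLex (W.symm x) with ⟨j, a⟩
  have hj : j = i := by rw [blk, h] at hx; exact hx
  subst hj
  exact ⟨a, by rw [← h]; simp⟩

theorem card_blk_fiber (W : (Σₗ i : Fin m, Fin (k i)) ≃o Fin N) (i : Fin m) :
    Nat.card {x : Fin N // blk W x = i} = k i := by
  have hb : Function.Bijective (fun a : Fin (k i) =>
      (⟨W (toLex ⟨i, a⟩), by simp [blk]⟩ : {x : Fin N // blk W x = i})) := by
    constructor
    · intro a b hab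
      have h1 := W.injective (congrArg Subtype.val hab)
      have h2 := toLex.injective h1
      simpa using h2
    · rintro ⟨x, hx⟩
      obtain ⟨a, ha⟩ := blk_eq_iff W hx
      exact ⟨a, by simp [ha]⟩
  simpa using (Nat.card_eq_of_bijective _ hb).symm

end BV

section CastSigma
variable {k k' : Fin m → ℕ}

/-- reindexing cast order iso between lex sigmas of pointwise equal fiber sizes -/
def castSigma (keq : ∀ t, k' t = k t) : (Σₗ t : Fin m, Fin (k' t)) ≃o (Σₗ t : Fin m, Fin (k t)) where
  toEquiv := (ofLex : _ ≃ (Σ t : Fin m, Fin (k' t))).trans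
    ((Equiv.sigmaCongrRight (fun t => finCongr (keq t))).trans
      (toLex : _ ≃ (Σₗ t : Fin m, Fin (k t))))
  map_rel_iff' := by
    rintro ⟨i, x⟩ ⟨j, y⟩
    show (toLex (⟨i, finCongr (keq i) x⟩ : Σ t, Fin (k t)) ≤ toLex ⟨j, finCongr (keq j) y⟩) ↔ _
    rw [Sigma.Lex.le_def]; refine Iff.trans ?_ Sigma.Lex.le_def.symm
    constructor
    · rintro (h | ⟨h, h2⟩)
      · exact Or.inl h
      · obtain rfl : i = j := h
        refine Or.inr ⟨rfl, ?_⟩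
        have h3 : (finCongr (keq i) x) ≤ finCongr (keq i) y := h2
        show x ≤ y
        exact (Fin.castOrderIso (keq i)).le_iff_le.mp h3
    · rintro (h | ⟨h, h2⟩)
      · exact Or.inl h
      · obtain rfl : i = j := h
        refine Or.inr ⟨rfl, ?_⟩
        have h3 : x ≤ y := h2
        show (finCongr (keq i) x) ≤ finCongr (keq i) y
        exact (Fin.castOrderIso (keq i)).le_iff_le.mpr h3

@[simp] theorem castSigma_apply (keq : ∀ t, k' t = k t) (i : Fin m) (x : Fin (k' i)) :
    castSigma keq (toLex ⟨i, x⟩) = toLex ⟨i, Fin.cast (keq i) x⟩ := rfl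

end CastSigma

/-! ### small facts about `Fin` endomaps -/

theorem le_of_strictMono {g : Fin m → Fin m} (hg : StrictMono g) : ∀ i : Fin m, (i : ℕ) ≤ g i := by
  suffices h : ∀ n : ℕ, ∀ hn : n < m, n ≤ g ⟨n, hn⟩ by intro i; simpa using h i.val i.isLt
  intro n
  induction n with
  | zero => exact fun _ => Nat.zero_le _
  | succ n ih =>
    intro hn
    have h1 : n ≤ (g ⟨n, n.lt_succ_self.trans hn⟩ : ℕ) := ih _
    have h2 : g ⟨n, n.lt_succ_self.trans hn⟩ < g ⟨n + 1, hn⟩ := hg (by simp [Fin.lt_def])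
    rw [Fin.lt_def] at h2
    omega

theorem eq_id_of_monotone_surj {g : Fin m → Fin m} (hmono : Monotone g)
    (hsurj : Function.Surjective g) : ∀ i, g i = i := by
  have hinj : Function.Injective g := Finite.injective_iff_surjective.mpr hsurj
  have hsm : StrictMono g := hmono.strictMono_of_injective hinj
  set e := Equiv.ofBijective g ⟨hinj, hsurj⟩ with he
  have hesymm : StrictMono ⇑e.symm := by
    intro a b hab
    rcases lt_trichotomy (e.symm a) (e.symm b) with h | h | h
    · exact h
    · exact absurd (congrArg e h) (by simp [Equiv.apply_symm_apply]; exact hab.ne)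
    · have := hsm h
      rw [show g (e.symm b) = e (e.symm b) from rfl, show g (e.symm a) = e (e.symm a) from rfl] at this
      simp [Equiv.apply_symm_apply] at this
      exact absurd this (not_lt.mpr hab.le)
  intro i
  have h1 : (i : ℕ) ≤ g i := le_of_strictMono hsm i
  have h2 : (i : ℕ) ≤ e.symm i := le_of_strictMono hesymm i
  have h3 : g i ≤ i := by
    have := hsm.monotone (show i ≤ e.symm i from Fin.mk_le_of_le_val (by simpa using h2))
    rw [show g (e.symm i) = e (e.symm i) from rfl] at this
    simpa using this
  exact le_antisymm h3 (Fin.mk_le_of_le_val (by simpa using h1))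

end InflInv
namespace InflInv

open Function

variable {m : ℕ}

theorem sigmaCongr_mk {ι ι' : Type*} {β₁ : ι → Type*} {β₂ : ι' → Type*} (σ : ι ≃ ι')
    (F : ∀ i, β₁ i ≃ β₂ (σ i)) (i : ι) (a : β₁ i) :
    Equiv.sigmaCongr σ F ⟨i, a⟩ = ⟨σ i, F i a⟩ := by
  simp [Equiv.sigmaCongr, Equiv.sigmaCongrRight, Equiv.sigmaCongrLeft]

/-- the value-block structure of an inflation -/
noncomputable def FF (σ : Equiv.Perm (Fin m)) (k : Fin m → ℕ) :
    (Σₗ t : Fin m, Fin (k (σ.symm t))) ≃o Fin (∑ i, k i) :=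
  (finSigmaOrderEquiv fun t => k (σ.symm t)).trans (Fin.castOrderIso (Equiv.sum_comp σ.symm k))

theorem infl_eq (σ : Equiv.Perm (Fin m)) (k : Fin m → ℕ) (α : ∀ i, Equiv.Perm (Fin (k i)))
    (x : Fin (∑ i, k i)) :
    inflation σ k α x = FF σ k (toLex (Equiv.sigmaCongr σ
      (fun i => (α i).trans (finCongr (congrArg k (σ.symm_apply_apply i).symm)))
      (ofLex ((finSigmaOrderEquiv k).symm x)))) := rfl

theorem vv_infl (σ : Equiv.Perm (Fin m)) (k : Fin m → ℕ) (α : ∀ i, Equiv.Perm (Fin (k i)))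
    (x : Fin (∑ i, k i)) :
    blk (FF σ k) (inflation σ k α x) = σ (blk (finSigmaOrderEquiv k) x) := by
  rw [infl_eq]
  unfold blk
  rw [OrderIso.symm_apply_apply]
  rcases h : ofLex ((finSigmaOrderEquiv k).symm x) with ⟨i, a⟩
  rw [sigmaCongr_mk]
  simp

theorem infl_apply (σ : Equiv.Perm (Fin m)) (k : Fin m → ℕ) (α : ∀ i, Equiv.Perm (Fin (k i)))
    (keq : ∀ t, k (σ.symm t) = k t) (i : Fin m) (a : Fin (k i)) (h' : k i = k (σ i)) :
    inflation σ k α ((finSigmaOrderEquiv k) (toLex ⟨i, a⟩)) =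
      (finSigmaOrderEquiv k) (toLex ⟨σ i, Fin.cast h' (α i a)⟩) := by
  have hF : FF σ k = OrderIso.trans (castSigma keq) (finSigmaOrderEquiv k) :=
    Subsingleton.elim _ _
  rw [infl_eq, OrderIso.symm_apply_apply, ofLex_toLex, sigmaCongr_mk, hF]
  show (finSigmaOrderEquiv k) (castSigma keq (toLex ⟨σ i, _⟩)) = _
  rw [castSigma_apply]
  exact congrArg _ (congrArg toLex (congrArg (Sigma.mk (σ i)) (Fin.ext (by simp))))

end InflInv
namespace InflInv

theorem perm2_cases (σ : Equiv.Perm (Fin 2)) : σ = Equiv.refl (Fin 2) ∨ σ = Equiv.swap 0 1 := by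
  revert σ
  decide

theorem contiguous_pair {n : ℕ} (a b : Fin n) (hab : (a : ℕ) + 1 = b) :
    SetContiguous {a, b} := by
  intro p q r hp hq hpr hrq
  simp only [Set.mem_insert_iff, Set.mem_singleton_iff] at hp hq ⊢
  rw [Fin.le_def] at hpr hrq
  rw [Fin.ext_iff, Fin.ext_iff]
  rcases hp with rfl | rfl <;> rcases hq with rfl | rfl <;> omega

theorem not_simple3 (σ : Equiv.Perm (Fin 3)) : ¬ IsSimple σ := by
  rintro ⟨-, h⟩
  have h01 : σ 0 ≠ σ 1 := fun h => absurd (σ.injective h) (by decide)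
  have h12 : σ 1 ≠ σ 2 := fun h => absurd (σ.injective h) (by decide)
  have h02 : σ 0 ≠ σ 2 := fun h => absurd (σ.injective h) (by decide)
  have hlt : ∀ i : Fin 3, (σ i : ℕ) < 3 := fun i => (σ i).isLt
  rw [Fin.ne_iff_vne] at h01 h12 h02
  by_cases hadj : (σ 0 : ℕ) + 1 = σ 1 ∨ (σ 1 : ℕ) + 1 = σ 0
  · -- use S = {0, 1}
    have hS : IsPermInterval σ {0, 1} := by
      constructor
      · exact contiguous_pair 0 1 rfl
      · rw [Set.image_pair]
        rcases hadj with hadj | hadj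
        · exact contiguous_pair _ _ hadj
        · rw [Set.pair_comm]
          exact contiguous_pair _ _ hadj
    rcases h _ hS with hc | hc
    · rw [Set.ncard_pair (by decide)] at hc; omega
    · have : (2 : Fin 3) ∈ ({0, 1} : Set (Fin 3)) := hc ▸ Set.mem_univ _
      simp only [Set.mem_insert_iff, Set.mem_singleton_iff] at this
      rcases this with h | h <;> exact absurd h (by decide)
  · -- then σ 1 and σ 2 are adjacent
    have hadj2 : (σ 1 : ℕ) + 1 = σ 2 ∨ (σ 2 : ℕ) + 1 = σ 1 := by
      have := hlt 0; have := hlt 1; have := hlt 2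
      omega
    have hS : IsPermInterval σ {1, 2} := by
      constructor
      · exact contiguous_pair 1 2 rfl
      · rw [Set.image_pair]
        rcases hadj2 with hadj2 | hadj2
        · exact contiguous_pair _ _ hadj2
        · rw [Set.pair_comm]
          exact contiguous_pair _ _ hadj2
    rcases h _ hS with hc | hc
    · rw [Set.ncard_pair (by decide)] at hc; omega
    · have : (0 : Fin 3) ∈ ({1, 2} : Set (Fin 3)) := hc ▸ Set.mem_univ _
      simp only [Set.mem_insert_iff, Set.mem_singleton_iff] at this
      rcases this with h | h <;> exact absurd h (by decide)

end InflInv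
namespace InflInv

set_option maxHeartbeats 4000000 in
theorem keq_of_inv {m : ℕ} (σ : Equiv.Perm (Fin m)) (hσ : IsSimple σ)
    (hσ21 : ∀ h : m = 2, (finCongr h).permCongr σ ≠ Equiv.swap 0 1)
    (k : Fin m → ℕ) (hk : ∀ i, 0 < k i) (α : ∀ i, Equiv.Perm (Fin (k i)))
    (hππ : ∀ x, inflation σ k α (inflation σ k α x) = x) :
    ∀ t : Fin m, k (σ.symm t) = k t := by
  obtain ⟨hm2, hsimple⟩ := hσ
  by_cases hm2' : m = 2
  · subst hm2'
    have hσid : σ = Equiv.refl (Fin 2) := by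
      refine (perm2_cases σ).resolve_right fun h => hσ21 rfl ?_
      rw [h]
      ext x
      simp [Equiv.permCongr_def]
    subst hσid
    intro t; rfl
  by_cases hm3 : m = 3
  · subst hm3; exact absurd ⟨hm2, hsimple⟩ (not_simple3 σ)
  have hm4 : 4 ≤ m := by omega
  set π := inflation σ k α with hπdef
  set b := blk (finSigmaOrderEquiv k) with hbdef
  set v := blk (FF σ k) with hvdef
  have hbmono : Monotone b := blk_mono _
  have hvmono : Monotone v := blk_mono _
  have hbsurj : Function.Surjective b := blk_surj _ hk
  have hvsurj : Function.Surjective v := blk_surj _ (fun t => hk _)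
  have hvπ : ∀ x, v (π x) = σ (b x) := fun x => vv_infl σ k α x
  have hbπ : ∀ x, b (π x) = σ.symm (v x) := by
    intro x
    have h1 := hvπ (π x)
    rw [hππ] at h1
    rw [h1, Equiv.symm_apply_apply]
  set J : Fin m → Set (Fin m) := fun t => b '' {x | v x = t} with hJdef
  set T : Fin m → Set (Fin m) := fun i => v '' {x | b x = i} with hTdef
  have hJmem : ∀ t j, j ∈ J t ↔ ∃ x, v x = t ∧ b x = j := by
    intro t j
    simp only [hJdef, Set.mem_image, Set.mem_setOf_eq]
  have hTmem : ∀ i s, s ∈ T i ↔ ∃ x, b x = i ∧ v x = s := by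
    intro i s
    simp only [hTdef, Set.mem_image, Set.mem_setOf_eq]
  have hTJ : ∀ t, σ '' J t = T (σ.symm t) := by
    intro t
    ext s
    rw [hTmem]
    constructor
    · rintro ⟨j, hj, rfl⟩
      rw [hJmem] at hj
      obtain ⟨x, hxv, hxb⟩ := hj
      exact ⟨π x, by rw [hbπ, hxv], by rw [hvπ, hxb]⟩
    · rintro ⟨y, hyb, hyv⟩
      refine ⟨b (π y), (hJmem _ _).mpr ⟨π y, ?_, rfl⟩, ?_⟩
      · rw [hvπ, hyb, Equiv.apply_symm_apply]
      · rw [hbπ, Equiv.apply_symm_apply]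
        exact hyv
  have hJcont : ∀ t, SetContiguous (J t) := by
    intro t p q r hp hq hpr hrq
    rcases eq_or_lt_of_le hpr with rfl | hpr'
    · exact hp
    rcases eq_or_lt_of_le hrq with rfl | hrq'
    · exact hq
    obtain ⟨x1, hx1v, hx1b⟩ := (hJmem t p).mp hp
    obtain ⟨x2, hx2v, hx2b⟩ := (hJmem t q).mp hq
    obtain ⟨y, hy⟩ := hbsurj r
    have h1 : x1 < y := by
      by_contra hle
      exact absurd (hbmono (not_lt.mp hle)) (by rw [hy, hx1b]; exact not_le.mpr hpr')
    have h2 : y < x2 := by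
      by_contra hle
      exact absurd (hbmono (not_lt.mp hle)) (by rw [hy, hx2b]; exact not_le.mpr hrq')
    have hv : v y = t :=
      le_antisymm (by rw [← hx2v]; exact hvmono h2.le) (by rw [← hx1v]; exact hvmono h1.le)
    exact (hJmem t r).mpr ⟨y, hv, hy⟩
  have hTcont : ∀ i, SetContiguous (T i) := by
    intro i p q r hp hq hpr hrq
    rcases eq_or_lt_of_le hpr with rfl | hpr'
    · exact hp
    rcases eq_or_lt_of_le hrq with rfl | hrq'
    · exact hq
    obtain ⟨x1, hx1b, hx1v⟩ := (hTmem i p).mp hp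
    obtain ⟨x2, hx2b, hx2v⟩ := (hTmem i q).mp hq
    obtain ⟨y, hy⟩ := hvsurj r
    have h1 : x1 < y := by
      by_contra hle
      exact absurd (hvmono (not_lt.mp hle)) (by rw [hy, hx1v]; exact not_le.mpr hpr')
    have h2 : y < x2 := by
      by_contra hle
      exact absurd (hvmono (not_lt.mp hle)) (by rw [hy, hx2v]; exact not_le.mpr hrq')
    have hb : b y = i :=
      le_antisymm (by rw [← hx2b]; exact hbmono h2.le) (by rw [← hx1b]; exact hbmono h1.le)
    exact (hTmem i r).mpr ⟨y, hb, hy⟩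
  have hJdich : ∀ t, (J t).ncard ≤ 1 ∨ J t = Set.univ := by
    intro t
    refine hsimple (J t) ⟨hJcont t, ?_⟩
    rw [hTJ t]
    exact hTcont _
  by_cases hall : ∀ t, (J t).ncard ≤ 1
  · -- all blocks match up
    choose w hw using hvsurj
    have key : ∀ x y, v x = v y → b x = b y := by
      intro x y hxy
      exact (Set.ncard_le_one (Set.toFinite (J (v x)))).mp (hall (v x))
        _ ((hJmem _ _).mpr ⟨x, rfl, rfl⟩) _ ((hJmem _ _).mpr ⟨y, hxy.symm, rfl⟩)
    have hgx : ∀ x, b x = b (w (v x)) := fun x => key x (w (v x)) (by rw [hw])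
    set g : Fin m → Fin m := fun t => b (w t) with hgdef
    have hgmono : Monotone g := by
      intro t t' htt'
      rcases eq_or_lt_of_le htt' with rfl | hlt
      · exact le_rfl
      have hxx : w t < w t' := by
        by_contra hle
        have h3 := hvmono (not_lt.mp hle)
        rw [hw, hw] at h3
        exact absurd h3 (not_le.mpr hlt)
      exact hbmono hxx.le
    have hgsurj : Function.Surjective g := by
      intro i
      obtain ⟨x, hx⟩ := hbsurj i
      exact ⟨v x, by show b (w (v x)) = i; rw [← hgx x, hx]⟩
    have hgid : ∀ i, g i = i := eq_id_of_monotone_surj hgmono hgsurj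
    have hvb : ∀ x, v x = b x := by
      intro x
      rw [hgx x]
      exact (hgid (v x)).symm
    intro t
    have h1 : Nat.card {x : Fin (∑ i, k i) // blk (FF σ k) x = t} = k (σ.symm t) :=
      card_blk_fiber (FF σ k) t
    have h2 : Nat.card {x : Fin (∑ i, k i) // blk (finSigmaOrderEquiv k) x = t} = k t :=
      card_blk_fiber (finSigmaOrderEquiv k) t
    rw [← h1, ← h2]
    refine Nat.card_congr (Equiv.subtypeEquivRight fun x => ?_)
    rw [show blk (FF σ k) x = v x from rfl, show blk (finSigmaOrderEquiv k) x = b x from rfl,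
      hvb x]
  · -- some value block spans everything : contradiction
    exfalso
    push_neg at hall
    obtain ⟨t0, ht0⟩ := hall
    have hJt0 : J t0 = Set.univ := (hJdich t0).resolve_left (not_le.mpr ht0)
    obtain ⟨x0, hx0v, hx0b⟩ := (hJmem t0 ⟨0, by omega⟩).mp (hJt0 ▸ Set.mem_univ _)
    obtain ⟨x9, hx9v, hx9b⟩ := (hJmem t0 ⟨m - 1, by omega⟩).mp (hJt0 ▸ Set.mem_univ _)
    have hBint : ∀ x, 0 < (b x : ℕ) → (b x : ℕ) < m - 1 → v x = t0 := by
      intro x hx1 hx2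
      have h1 : x0 < x := by
        by_contra hle
        have h3 := hbmono (not_lt.mp hle)
        rw [hx0b] at h3
        rw [Fin.le_def] at h3
        simp at h3
        omega
      have h2 : x < x9 := by
        by_contra hle
        have h3 := hbmono (not_lt.mp hle)
        rw [hx9b] at h3
        rw [Fin.le_def] at h3
        simp at h3
        omega
      exact le_antisymm (by rw [← hx9v]; exact hvmono h2.le)
        (by rw [← hx0v]; exact hvmono h1.le)
    set u : Fin m := σ.symm t0 with hu
    have hVsub : ∀ p : Fin m, 0 < (p : ℕ) → (p : ℕ) < m - 1 → ∀ x, v x = σ p → b x = u := by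
      intro p hp1 hp2 x hx
      have hTp : σ '' J (σ p) = T p := by rw [hTJ, Equiv.symm_apply_apply]
      have hmem : σ (b x) ∈ T p :=
        hTp ▸ Set.mem_image_of_mem σ ((hJmem _ _).mpr ⟨x, hx, rfl⟩)
      obtain ⟨y, hyb, hyv⟩ := (hTmem _ _).mp hmem
      have h3 : σ (b x) = t0 := by
        rw [← hyv]
        exact hBint y (by rw [hyb]; exact hp1) (by rw [hyb]; exact hp2)
      rw [hu]
      exact (Equiv.eq_symm_apply σ).mpr h3
    have hmemTu : ∀ p : Fin m, 0 < (p : ℕ) → (p : ℕ) < m - 1 → σ p ∈ T u := by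
      intro p hp1 hp2
      obtain ⟨y, hy⟩ := hvsurj (σ p)
      exact (hTmem _ _).mpr ⟨y, hVsub p hp1 hp2 y hy, hy⟩
    have hJσu : J (σ u) = Set.univ := by
      rcases hJdich (σ u) with hc | hc
      · exfalso
        have hTu : σ '' J (σ u) = T u := by rw [hTJ, Equiv.symm_apply_apply]
        have hp1 : σ ⟨1, by omega⟩ ∈ T u :=
          hmemTu ⟨1, by omega⟩ (by show (0:ℕ) < 1; omega) (by show (1:ℕ) < m - 1; omega)
        have hp2 : σ ⟨2, by omega⟩ ∈ T u :=
          hmemTu ⟨2, by omega⟩ (by show (0:ℕ) < 2; omega) (by show (2:ℕ) < m - 1; omega)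
        rw [← hTu] at hp1 hp2
        obtain ⟨j1, hj1, hj1e⟩ := hp1
        obtain ⟨j2, hj2, hj2e⟩ := hp2
        have e12 : j1 = j2 := (Set.ncard_le_one (Set.toFinite (J (σ u)))).mp hc _ hj1 _ hj2
        have e3 : (⟨1, by omega⟩ : Fin m) = ⟨2, by omega⟩ :=
          σ.injective (by rw [← hj1e, ← hj2e, e12])
        rw [Fin.ext_iff] at e3
        simp at e3
      · exact hc
    have hTu : T u = Set.univ := by
      have h3 : σ '' J (σ u) = T u := by rw [hTJ, Equiv.symm_apply_apply]
      rw [hJσu, Set.image_univ, Equiv.range_eq_univ] at h3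
      exact h3.symm
    obtain ⟨y0, hy0b, hy0v⟩ := (hTmem u ⟨0, by omega⟩).mp (hTu ▸ Set.mem_univ _)
    obtain ⟨y9, hy9b, hy9v⟩ := (hTmem u ⟨m - 1, by omega⟩).mp (hTu ▸ Set.mem_univ _)
    have hVint : ∀ x, 0 < (v x : ℕ) → (v x : ℕ) < m - 1 → b x = u := by
      intro x hx1 hx2
      have h1 : y0 < x := by
        by_contra hle
        have h3 := hvmono (not_lt.mp hle)
        rw [hy0v] at h3
        rw [Fin.le_def] at h3
        simp at h3
        omega
      have h2 : x < y9 := by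
        by_contra hle
        have h3 := hvmono (not_lt.mp hle)
        rw [hy9v] at h3
        rw [Fin.le_def] at h3
        simp at h3
        omega
      exact le_antisymm (by rw [← hy9b]; exact hbmono h2.le)
        (by rw [← hy0b]; exact hbmono h1.le)
    have hunotint : (u : ℕ) = 0 ∨ (u : ℕ) = m - 1 := by
      by_contra hcon
      push_neg at hcon
      have hint : 0 < (u : ℕ) ∧ (u : ℕ) < m - 1 := by
        have := u.isLt
        omega
      have hs : ∀ s : Fin m, 0 < (s : ℕ) → (s : ℕ) < m - 1 → s = t0 := by
        intro s h1 h2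
        obtain ⟨x, hx⟩ := hvsurj s
        have hbu : b x = u := hVint x (by rw [hx]; exact h1) (by rw [hx]; exact h2)
        have h4 := hBint x (by rw [hbu]; exact hint.1) (by rw [hbu]; exact hint.2)
        rw [← hx, h4]
      have e1 := hs ⟨1, by omega⟩ (by simp) (by simp; omega)
      have e2 := hs ⟨2, by omega⟩ (by simp) (by simp; omega)
      rw [← e2] at e1
      rw [Fin.ext_iff] at e1
      simp at e1
    have ht0notint : (t0 : ℕ) = 0 ∨ (t0 : ℕ) = m - 1 := by
      by_contra hcon
      push_neg at hcon
      have hint : 0 < (t0 : ℕ) ∧ (t0 : ℕ) < m - 1 := by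
        have := t0.isLt
        omega
      obtain ⟨x, hx⟩ := hbsurj ⟨1, by omega⟩
      have hv1 : v x = t0 := hBint x (by rw [hx]; simp) (by rw [hx]; simp; omega)
      have hbu : b x = u := hVint x (by rw [hv1]; exact hint.1) (by rw [hv1]; exact hint.2)
      rw [hx] at hbu
      rw [Fin.ext_iff] at hbu
      simp at hbu
      rcases hunotint with h | h <;> omega
    have hσu : σ u = t0 := by rw [hu]; exact Equiv.apply_symm_apply σ t0
    set W : Set (Fin m) := {i | i ≠ u} with hWdef
    have hWcont : SetContiguous W := by
      intro p q r hp hq hpr hrq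
      simp only [hWdef, Set.mem_setOf_eq] at hp hq ⊢
      rw [Fin.le_def] at hpr hrq
      rw [Fin.ne_iff_vne] at hp hq ⊢
      have := q.isLt
      rcases hunotint with h | h <;> omega
    have hWimg : σ '' W = {s | s ≠ t0} := by
      have h1 : W = ({u} : Set (Fin m))ᶜ := by ext i; simp [hWdef]
      rw [h1, Set.image_compl_eq σ.bijective, Set.image_singleton, hσu]
      ext s; simp
    have hWcont2 : SetContiguous (σ '' W) := by
      rw [hWimg]
      intro p q r hp hq hpr hrq
      simp only [Set.mem_setOf_eq] at hp hq ⊢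
      rw [Fin.le_def] at hpr hrq
      rw [Fin.ne_iff_vne] at hp hq ⊢
      have := q.isLt
      rcases ht0notint with h | h <;> omega
    rcases hsimple W ⟨hWcont, hWcont2⟩ with hc | hc
    · have m1 : (⟨1, by omega⟩ : Fin m) ∈ W := by
        simp only [hWdef, Set.mem_setOf_eq]
        rw [Fin.ne_iff_vne]
        simp
        rcases hunotint with h | h <;> omega
      have m2 : (⟨2, by omega⟩ : Fin m) ∈ W := by
        simp only [hWdef, Set.mem_setOf_eq]
        rw [Fin.ne_iff_vne]
        simp
        rcases hunotint with h | h <;> omega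
      have e12 := (Set.ncard_le_one (Set.toFinite W)).mp hc _ m1 _ m2
      rw [Fin.ext_iff] at e12
      simp at e12
    · have : u ∈ W := hc ▸ Set.mem_univ u
      simp [hWdef] at this

end InflInv

/-- For a simple permutation `σ ≠ 21`, the inflation `σ[α₁,…,α_m]` is an involution if and
only if `σ` is an involution and `αᵢ = α_{σ(i)}⁻¹` for all `i`. -/
theorem inflation_involution_iff {m : ℕ} (σ : Equiv.Perm (Fin m)) (hσ : IsSimple σ)
    (hσ21 : ∀ h : m = 2, (finCongr h).permCongr σ ≠ Equiv.swap 0 1)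
    (k : Fin m → ℕ) (hk : ∀ i, 0 < k i) (α : ∀ i, Equiv.Perm (Fin (k i))) :
    IsInvolution (inflation σ k α) ↔
      (IsInvolution σ ∧
        ∀ i, ∃ h : k (σ i) = k i, α i = (finCongr h).permCongr (α (σ i))⁻¹) := by
  constructor
  · intro hπ
    have hππ : ∀ x, inflation σ k α (inflation σ k α x) = x := by
      intro x
      have h1 : inflation σ k α (inflation σ k α x)
          = (inflation σ k α)⁻¹ (inflation σ k α x) := by rw [hπ]
      rw [h1]
      exact Equiv.symm_apply_apply _ _
    have keq := InflInv.keq_of_inv σ hσ hσ21 k hk α hππ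
    have kk : ∀ i, k i = k (σ i) := by
      intro i
      have h2 := keq (σ i)
      rw [Equiv.symm_apply_apply] at h2
      exact h2
    have hform : ∀ (i : Fin m) (a : Fin (k i)),
        inflation σ k α ((finSigmaOrderEquiv k) (toLex ⟨i, a⟩)) =
          (finSigmaOrderEquiv k) (toLex ⟨σ i, Fin.cast (kk i) (α i a)⟩) :=
      fun i a => InflInv.infl_apply σ k α keq i a (kk i)
    have hsig : ∀ (i : Fin m) (a : Fin (k i)),
        (⟨σ (σ i), Fin.cast (kk (σ i)) (α (σ i) (Fin.cast (kk i) (α i a)))⟩ : Σ j, Fin (k j))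
          = ⟨i, a⟩ := by
      intro i a
      have h2 := hππ ((finSigmaOrderEquiv k) (toLex ⟨i, a⟩))
      rw [hform i a, hform (σ i) (Fin.cast (kk i) (α i a))] at h2
      exact toLex.injective ((finSigmaOrderEquiv k).injective h2)
    have hfix : ∀ i, σ (σ i) = i := fun i => congrArg Sigma.fst (hsig i ⟨0, hk i⟩)
    constructor
    · show σ⁻¹ = σ
      rw [inv_eq_iff_mul_eq_one]
      refine Equiv.ext fun i => ?_
      simpa [Equiv.Perm.mul_apply] using hfix i
    · intro i
      refine ⟨(kk i).symm, ?_⟩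
      refine Equiv.ext fun a => ?_
      rw [Equiv.permCongr_apply]
      have hval : ((α (σ i)) (Fin.cast (kk i) (α i a)) : ℕ) = a := by
        have h3 := congrArg (fun p : (Σ j, Fin (k j)) => (p.2 : ℕ)) (hsig i a)
        simpa using h3
      have hc : (finCongr (kk i).symm).symm a = (α (σ i)) (Fin.cast (kk i) (α i a)) := by
        apply Fin.ext
        simp [hval]
      rw [hc, show ∀ (e : Equiv.Perm (Fin (k (σ i)))) x, e⁻¹ (e x) = x from fun e x => e.symm_apply_apply x]
      apply Fin.ext
      simp
  · rintro ⟨hσinv, hα⟩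
    have hmul : σ * σ = 1 := inv_eq_iff_mul_eq_one.mp hσinv
    have hσσ : ∀ i, σ (σ i) = i := by
      intro i
      have h2 : (σ * σ) i = (1 : Equiv.Perm (Fin m)) i := by rw [hmul]
      simpa [Equiv.Perm.mul_apply] using h2
    have hsymm : σ.symm = σ := by rw [← Equiv.Perm.inv_def]; exact hσinv
    have kk : ∀ i, k i = k (σ i) := fun i => ((hα i).choose).symm
    have keq : ∀ t, k (σ.symm t) = k t := fun t => by rw [hsymm]; exact (kk t).symm
    have hππ : ∀ x, inflation σ k α (inflation σ k α x) = x := by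
      intro x
      obtain ⟨p, hp⟩ : ∃ p, (finSigmaOrderEquiv k) p = x :=
        ⟨_, (finSigmaOrderEquiv k).apply_symm_apply x⟩
      rcases hq : ofLex p with ⟨i, a⟩
      have hx : x = (finSigmaOrderEquiv k) (toLex ⟨i, a⟩) := by
        rw [← hp, ← hq, toLex_ofLex]
      rw [hx, InflInv.infl_apply σ k α keq i a (kk i),
        InflInv.infl_apply σ k α keq (σ i) (Fin.cast (kk i) (α i a)) (kk (σ i))]
      obtain ⟨h, he⟩ := hα i
      have h5 : Fin.cast (kk i) (α i a) = (α (σ i))⁻¹ (Fin.cast h.symm a) := by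
        apply Fin.ext
        rw [he]
        simp [Equiv.permCongr_apply]
      have hsnd : HEq (Fin.cast (kk (σ i)) (α (σ i) (Fin.cast (kk i) (α i a)))) a := by
        rw [Fin.heq_ext_iff (congrArg k (hσσ i))]
        simp [h5, show ∀ (e : Equiv.Perm (Fin (k (σ i)))) x, e (e⁻¹ x) = x from fun e x => e.apply_symm_apply x]
      exact congrArg _ (congrArg toLex (Sigma.ext (hσσ i) hsnd))
    show (inflation σ k α)⁻¹ = inflation σ k α
    rw [inv_eq_iff_mul_eq_one]
    refine Equiv.ext fun x => ?_
    simpa [Equiv.Perm.mul_apply] using hππ x
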